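/- Let d ≥ 1 be an integer. There exist c > 0 and t₀ ∈ (0,1), depending only on d, such that for every t ∈ (0,t₀) and every real N ≥ t^{−1/2}, ∑_{n ∈ ℤ^d, 3 ≤ |n| ≤ N} e^{−|n|² t} |n|^{2−d} (log|n|)^{−1} (log log|n|)^{−1} ≥ c · t^{−1} (log(1/t))^{−1} (log log(1/t))^{−1}. -/

import Mathlib

open scoped BigOperators

/-- Euclidean norm of a lattice point `n ∈ ℤ^d`, viewed in `ℝ^d`. -/
noncomputable def znorm {d : ℕ} (n : Fin d → ℤ) : ℝ :=
  Real.sqrt (∑ i, ((n i : ℝ)) ^ 2)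

lemma znorm_nonneg {d : ℕ} (n : Fin d → ℤ) : 0 ≤ znorm n := Real.sqrt_nonneg _

lemma abs_coord_le_znorm {d : ℕ} (n : Fin d → ℤ) (i : Fin d) : |(n i : ℝ)| ≤ znorm n := by
  rw [← Real.sqrt_sq_eq_abs]
  exact Real.sqrt_le_sqrt (Finset.single_le_sum (f := fun j => ((n j : ℝ))^2)
    (fun j _ => sq_nonneg _) (Finset.mem_univ i))

lemma znorm_le_of_coord {d : ℕ} (n : Fin d → ℤ) (M : ℝ) (hM : 0 ≤ M)
    (h : ∀ i, |(n i : ℝ)| ≤ M) : znorm n ≤ Real.sqrt d * M := by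
  have : znorm n ≤ Real.sqrt (∑ _i : Fin d, M ^ 2) := by
    apply Real.sqrt_le_sqrt
    apply Finset.sum_le_sum
    intro i _
    calc ((n i : ℝ))^2 = |(n i : ℝ)|^2 := (sq_abs _).symm
      _ ≤ M^2 := by apply pow_le_pow_left₀ (abs_nonneg _) (h i)
  refine this.trans_eq ?_
  rw [Finset.sum_const, Finset.card_univ, Fintype.card_fin, nsmul_eq_mul,
    Real.sqrt_mul (by positivity), Real.sqrt_sq hM]

lemma finite_index {d : ℕ} (N : ℝ) :
    Finite {n : Fin d → ℤ // 3 ≤ znorm n ∧ znorm n ≤ N} := by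
  have hfin : (Set.Icc (fun _ => -⌈N⌉ : Fin d → ℤ) (fun _ => ⌈N⌉)).Finite :=
    Set.finite_Icc _ _
  apply Set.Finite.to_subtype (s := {n : Fin d → ℤ | 3 ≤ znorm n ∧ znorm n ≤ N})
  apply hfin.subset
  rintro n ⟨h3, hN⟩
  have hN0 : (0:ℝ) ≤ N := le_trans (by norm_num) (le_trans h3 hN)
  constructor <;> intro i <;>
  · have h1 : |(n i : ℝ)| ≤ N := (abs_coord_le_znorm n i).trans hN
    have h2 : N ≤ (⌈N⌉ : ℝ) := Int.le_ceil N
    rw [abs_le] at h1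
    first
      | exact_mod_cast le_trans (neg_le_neg h2) h1.1
      | exact_mod_cast h1.2.trans h2


lemma logs_pos {z : ℝ} (hz : 3 ≤ z) : 0 < Real.log z ∧ 0 < Real.log (Real.log z) := by
  have h1 : 1 < Real.log z := by
    rw [Real.lt_log_iff_exp_lt (by linarith)]
    calc Real.exp 1 < 2.7182818286 := Real.exp_one_lt_d9
      _ ≤ 3 := by norm_num
      _ ≤ z := hz
  exact ⟨by linarith, Real.log_pos h1⟩

lemma rpow_lb (d : ℕ) (hd : 0 < d) (m z : ℝ) (hm : 0 < m) (hz1 : m / 2 ≤ z)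
    (hz2 : z ≤ Real.sqrt d * m) :
    m ^ ((2 : ℝ) - d) * ((2 * Real.sqrt d) ^ d)⁻¹ ≤ z ^ ((2 : ℝ) - d) := by
  have hz0 : 0 < z := lt_of_lt_of_le (by linarith) hz1
  have hd1 : (1 : ℝ) ≤ d := by exact_mod_cast hd
  have hs1 : (1 : ℝ) ≤ Real.sqrt d := by
    rw [show (1 : ℝ) = Real.sqrt 1 by simp]
    exact Real.sqrt_le_sqrt hd1
  rcases lt_or_ge d 3 with h3 | h3
  · interval_cases d
    · simp only [Nat.cast_one, Real.sqrt_one, mul_one, pow_one]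
      norm_num
      linarith
    · have h2 : ((2 : ℝ) - (2 : ℕ)) = 0 := by norm_num
      rw [h2, Real.rpow_zero, Real.rpow_zero, one_mul]
      have hsq : (2 * Real.sqrt 2) ^ 2 = 8 := by
        rw [mul_pow, Real.sq_sqrt (by norm_num : (0:ℝ) ≤ 2)]; norm_num
      rw [show ((2:ℕ):ℝ) = 2 by norm_num, hsq]
      norm_num
  · have hneg : (2 : ℝ) - d ≤ 0 := by
      have : (3 : ℝ) ≤ d := by exact_mod_cast h3
      linarith
    have step1 : (Real.sqrt d * m) ^ ((2 : ℝ) - d) ≤ z ^ ((2 : ℝ) - d) :=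
      Real.rpow_le_rpow_of_nonpos hz0 hz2 hneg
    have step2 : m ^ ((2 : ℝ) - d) * ((2 * Real.sqrt d) ^ d)⁻¹
        ≤ (Real.sqrt d * m) ^ ((2 : ℝ) - d) := by
      rw [Real.mul_rpow (Real.sqrt_nonneg _) hm.le]
      rw [mul_comm (Real.sqrt ↑d ^ ((2:ℝ) - ↑d))]
      apply mul_le_mul_of_nonneg_left _ (Real.rpow_nonneg hm.le _)
      -- ((2*√d)^d)⁻¹ ≤ (√d)^(2-d)
      have hkey : Real.sqrt ↑d ^ ((2:ℝ) - ↑d) = ((Real.sqrt ↑d) ^ ((d : ℝ) - 2))⁻¹ := by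
        rw [show (2:ℝ) - (d:ℝ) = -((d:ℝ) - 2) by ring, Real.rpow_neg (Real.sqrt_nonneg _)]
      rw [hkey]
      apply inv_anti₀ (Real.rpow_pos_of_pos (by linarith) _)
      calc Real.sqrt ↑d ^ ((d:ℝ) - 2) ≤ Real.sqrt ↑d ^ (d:ℝ) :=
            Real.rpow_le_rpow_of_exponent_le hs1 (by linarith)
        _ = Real.sqrt ↑d ^ d := Real.rpow_natCast _ d
        _ ≤ (2 * Real.sqrt ↑d) ^ d := by
            apply pow_le_pow_left₀ (Real.sqrt_nonneg _); linarith
    exact step2.trans step1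

set_option maxHeartbeats 1000000 in
theorem stmt3 (d : ℕ) (hd : 0 < d) :
    ∃ c : ℝ, 0 < c ∧ ∃ t₀ : ℝ, 0 < t₀ ∧ t₀ < 1 ∧
      ∀ t : ℝ, 0 < t → t < t₀ → ∀ N : ℝ, t ^ (-(1 : ℝ) / 2) ≤ N →
        c * t⁻¹ * (Real.log (1 / t))⁻¹ * (Real.log (Real.log (1 / t)))⁻¹
          ≤ ∑' n : {n : Fin d → ℤ // 3 ≤ znorm n ∧ znorm n ≤ N},
              Real.exp (-(znorm n.1 ^ 2) * t) * znorm n.1 ^ ((2 : ℝ) - d) *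
                (Real.log (znorm n.1))⁻¹ * (Real.log (Real.log (znorm n.1)))⁻¹ := by
  classical
  have hdR : (0:ℝ) < d := by exact_mod_cast hd
  have hd1 : (1:ℝ) ≤ d := by exact_mod_cast hd
  have hsd0 : (0:ℝ) < Real.sqrt d := Real.sqrt_pos.mpr hdR
  have hsd1 : (1:ℝ) ≤ Real.sqrt d := by
    rw [show (1:ℝ) = Real.sqrt 1 by simp]; exact Real.sqrt_le_sqrt hd1
  refine ⟨(Real.exp 1 * 2 ^ d * (2 * Real.sqrt d) ^ d * (4 * d))⁻¹, ?_,
    (16384 * d : ℝ)⁻¹, by positivity, ?_, ?_⟩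
  · apply inv_pos.mpr
    apply mul_pos (mul_pos (mul_pos (Real.exp_pos 1) (by positivity))
      (pow_pos (by linarith) d)) (by linarith)
  · apply inv_lt_one_of_one_lt₀; linarith
  intro t ht ht0 N hN
  have ht1 : t < 1 := by
    apply lt_of_lt_of_le ht0
    rw [inv_le_one_iff₀]; right; linarith
  -- R and its properties
  set R : ℝ := t ^ (-(1:ℝ)/2) with hRdef
  have hR0 : 0 < R := Real.rpow_pos_of_pos ht _
  have hR2 : R ^ 2 = t⁻¹ := by
    rw [hRdef, ← Real.rpow_natCast (t ^ (-(1:ℝ)/2)) 2, ← Real.rpow_mul ht.le]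
    norm_num
    exact Real.rpow_neg_one t
  have htinv : (16384:ℝ) * d ≤ t⁻¹ := by
    rw [← one_div, le_div_iff₀ ht]
    have hpos : (0:ℝ) < 16384 * d := by linarith
    calc 16384 * (d:ℝ) * t ≤ 16384 * (d:ℝ) * (16384 * (d:ℝ))⁻¹ := by
          apply mul_le_mul_of_nonneg_left ht0.le hpos.le
      _ = 1 := mul_inv_cancel₀ hpos.ne'
  have hRbig : 128 * Real.sqrt d ≤ R := by
    have h1 : Real.sqrt (16384 * d) ≤ Real.sqrt (R ^ 2) :=
      Real.sqrt_le_sqrt (by rw [hR2]; exact htinv)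
    rwa [Real.sqrt_sq hR0.le, Real.sqrt_mul (by norm_num) _,
      show Real.sqrt 16384 = 128 by
        rw [show (16384:ℝ) = 128 ^ 2 by norm_num, Real.sqrt_sq (by norm_num)]] at h1
  have hRt : R ≤ t⁻¹ := by
    rw [← Real.rpow_neg_one t]
    exact Real.rpow_le_rpow_of_exponent_ge ht ht1.le (by norm_num)
  -- the integer scale m
  set x : ℝ := R / Real.sqrt d with hxdef
  have hx128 : (128:ℝ) ≤ x := by
    rw [hxdef, le_div_iff₀ hsd0]; linarith
  set m : ℕ := ⌊x⌋₊ with hmdef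
  have hm128 : 128 ≤ m := Nat.le_floor (by exact_mod_cast hx128)
  have hmR : (128:ℝ) ≤ m := by exact_mod_cast hm128
  have hm0 : (0:ℝ) < m := by linarith
  have hmx : (m:ℝ) ≤ x := Nat.floor_le (by linarith)
  have hxm : x / 2 ≤ m := by
    have := Nat.sub_one_lt_floor x
    rw [← hmdef] at this
    linarith
  have hsdmR : Real.sqrt d * m ≤ R := by
    have : Real.sqrt d * m ≤ Real.sqrt d * x := by
      apply mul_le_mul_of_nonneg_left hmx hsd0.le
    rwa [hxdef, mul_div_cancel₀ _ hsd0.ne'] at this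
  have hm2 : t⁻¹ ≤ 4 * d * m ^ 2 := by
    have h1 : R ≤ 2 * Real.sqrt d * m := by
      have : x ≤ 2 * m := by linarith
      rw [hxdef, div_le_iff₀ hsd0] at this
      linarith [this]
    calc t⁻¹ = R ^ 2 := hR2.symm
      _ ≤ (2 * Real.sqrt d * m) ^ 2 := by
          apply pow_le_pow_left₀ hR0.le h1
      _ = 4 * ((Real.sqrt d) ^ 2) * m ^ 2 := by ring
      _ = 4 * d * m ^ 2 := by rw [Real.sq_sqrt hdR.le]
  -- logs
  have hA : 1 < Real.log (1 / t) := by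
    rw [Real.lt_log_iff_exp_lt (by positivity)]
    calc Real.exp 1 < 2.7182818286 := Real.exp_one_lt_d9
      _ ≤ 16384 := by norm_num
      _ ≤ 16384 * d := by nlinarith
      _ ≤ t⁻¹ := htinv
      _ = 1 / t := (one_div t).symm
  have hA0 : 0 < Real.log (1 / t) := by linarith
  have hB0 : 0 < Real.log (Real.log (1 / t)) := Real.log_pos hA
  -- the finset of lattice points
  set a : ℤ := ((m / 2 : ℕ) : ℤ) + 1 with hadef
  set S : Finset (Fin d → ℤ) := Fintype.piFinset (fun _ : Fin d => Finset.Icc a (m : ℤ))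
    with hSdef
  have hcoord : ∀ n ∈ S, ∀ i, (m:ℝ)/2 < (n i : ℝ) ∧ (n i : ℝ) ≤ (m:ℝ) ∧ (65:ℝ) ≤ (n i : ℝ) := by
    intro n hn i
    rw [hSdef, Fintype.mem_piFinset] at hn
    have h := hn i
    rw [Finset.mem_Icc, hadef] at h
    have h1 : ((m / 2 : ℕ) : ℝ) + 1 ≤ (n i : ℝ) := by
      have h' := Int.cast_le (R := ℝ) |>.mpr h.1
      rw [Int.cast_add, Int.cast_one, Int.cast_natCast] at h'
      exact h'
    have h2 : (n i : ℝ) ≤ (m : ℝ) := by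
      have h' := Int.cast_le (R := ℝ) |>.mpr h.2
      rw [Int.cast_natCast] at h'
      exact h'
    have h3 : (m:ℝ) ≤ 2 * ((m / 2 : ℕ) : ℝ) + 1 := by
      have : m ≤ 2 * (m / 2) + 1 := by omega
      exact_mod_cast this
    have h4 : (64:ℝ) ≤ ((m / 2 : ℕ) : ℝ) := by
      have : 64 ≤ m / 2 := by omega
      exact_mod_cast this
    exact ⟨by linarith, h2, by linarith⟩
  -- znorm bounds on S
  have hzbound : ∀ n ∈ S, (m:ℝ)/2 ≤ znorm n ∧ (65:ℝ) ≤ znorm n ∧ znorm n ≤ Real.sqrt d * m := by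
    intro n hn
    have hc := hcoord n hn
    have i0 : Fin d := ⟨0, hd⟩
    have hlow : (n i0 : ℝ) ≤ znorm n := (le_abs_self _).trans (abs_coord_le_znorm n i0)
    have hup : znorm n ≤ Real.sqrt d * m := by
      apply znorm_le_of_coord n m hm0.le
      intro i
      rw [abs_le]
      exact ⟨by linarith [(hc i).2.2], (hc i).2.1⟩
    exact ⟨by linarith [(hc i0).1], by linarith [(hc i0).2.2], hup⟩
  have hPS : ∀ n ∈ S, 3 ≤ znorm n ∧ znorm n ≤ N := by
    intro n hn
    obtain ⟨h1, h2, h3⟩ := hzbound n hn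
    exact ⟨by linarith, by linarith [hsdmR, hN]⟩
  -- term lower bound
  set A : ℝ := Real.log (1 / t) with hAdef
  set B : ℝ := Real.log (Real.log (1 / t)) with hBdef
  set TermLB : ℝ := Real.exp (-1) * ((m:ℝ) ^ ((2:ℝ) - d) * ((2 * Real.sqrt d) ^ d)⁻¹)
      * A⁻¹ * B⁻¹ with hTdef
  have hterm : ∀ n ∈ S, TermLB ≤
      Real.exp (-(znorm n ^ 2) * t) * znorm n ^ ((2 : ℝ) - d) *
        (Real.log (znorm n))⁻¹ * (Real.log (Real.log (znorm n)))⁻¹ := by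
    intro n hn
    obtain ⟨hz1, hz65, hz2⟩ := hzbound n hn
    have hz0 : 0 < znorm n := by linarith
    have hzR : znorm n ≤ R := hz2.trans hsdmR
    have hlogs := logs_pos (show (3:ℝ) ≤ znorm n by linarith)
    have hzt : znorm n ^ 2 * t ≤ 1 := by
      have h1 : znorm n ^ 2 ≤ R ^ 2 := pow_le_pow_left₀ hz0.le hzR 2
      rw [hR2] at h1
      calc znorm n ^ 2 * t ≤ t⁻¹ * t := by apply mul_le_mul_of_nonneg_right h1 ht.le
        _ = 1 := inv_mul_cancel₀ ht.ne'
    have b1 : Real.exp (-1) ≤ Real.exp (-(znorm n ^ 2) * t) := by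
      apply Real.exp_le_exp.mpr; nlinarith
    have b2 : (m:ℝ) ^ ((2:ℝ) - d) * ((2 * Real.sqrt d) ^ d)⁻¹ ≤ znorm n ^ ((2:ℝ) - d) :=
      rpow_lb d hd m (znorm n) hm0 hz1 hz2
    have hzlogA : Real.log (znorm n) ≤ A := by
      rw [hAdef]
      apply Real.log_le_log hz0
      calc znorm n ≤ R := hzR
        _ ≤ t⁻¹ := hRt
        _ = 1 / t := (one_div t).symm
    have b3 : A⁻¹ ≤ (Real.log (znorm n))⁻¹ := inv_anti₀ hlogs.1 hzlogA
    have b4 : B⁻¹ ≤ (Real.log (Real.log (znorm n)))⁻¹ := by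
      apply inv_anti₀ hlogs.2
      rw [hBdef]
      exact Real.log_le_log hlogs.1 hzlogA
    rw [hTdef]
    have h1 : (0:ℝ) ≤ (m:ℝ) ^ ((2:ℝ) - d) * ((2 * Real.sqrt d) ^ d)⁻¹ := by positivity
    calc Real.exp (-1) * ((m:ℝ) ^ ((2:ℝ) - d) * ((2 * Real.sqrt d) ^ d)⁻¹) * A⁻¹ * B⁻¹
        ≤ Real.exp (-(znorm n ^ 2) * t) * znorm n ^ ((2:ℝ) - d) * A⁻¹ * B⁻¹ := by
          apply mul_le_mul_of_nonneg_right _ (inv_nonneg.mpr hB0.le)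
          apply mul_le_mul_of_nonneg_right _ (inv_nonneg.mpr hA0.le)
          exact mul_le_mul b1 b2 h1 (Real.exp_pos _).le
      _ ≤ Real.exp (-(znorm n ^ 2) * t) * znorm n ^ ((2:ℝ) - d) *
            (Real.log (znorm n))⁻¹ * (Real.log (Real.log (znorm n)))⁻¹ := by
          have hpos : (0:ℝ) ≤ Real.exp (-(znorm n ^ 2) * t) * znorm n ^ ((2:ℝ) - d) := by
            positivity
          apply mul_le_mul _ b4 (inv_nonneg.mpr hB0.le)
            (mul_nonneg hpos (inv_nonneg.mpr hlogs.1.le))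
          exact mul_le_mul_of_nonneg_left b3 hpos
  -- cardinality
  have hcard : ((m:ℝ)/2) ≤ ((Finset.Icc a (m:ℤ)).card : ℝ) := by
    have h1 : (Finset.Icc a (m:ℤ)).card = m - m / 2 := by
      rw [Int.card_Icc, hadef]
      have : ((m:ℤ) + 1 - (((m / 2 : ℕ) : ℤ) + 1)) = ((m - m / 2 : ℕ) : ℤ) := by
        push_cast [Nat.cast_sub (Nat.div_le_self m 2)]
        ring
      rw [this, Int.toNat_natCast]
    rw [h1]
    have h2 : ((m - m / 2 : ℕ) : ℝ) = (m:ℝ) - ((m / 2 : ℕ) : ℝ) := by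
      rw [Nat.cast_sub (Nat.div_le_self m 2)]
    rw [h2]
    have h3 : ((m / 2 : ℕ) : ℝ) ≤ (m:ℝ) / 2 := Nat.cast_div_le
    linarith
  have hScard : ((m:ℝ)/2) ^ d ≤ (S.card : ℝ) := by
    rw [hSdef, Fintype.card_piFinset]
    rw [Finset.prod_const, Finset.card_univ, Fintype.card_fin]
    rw [Nat.cast_pow]
    exact pow_le_pow_left₀ (by linarith) hcard d
  -- TermLB positivity
  have hTpos : 0 < TermLB := by
    rw [hTdef]
    apply mul_pos (mul_pos (mul_pos (Real.exp_pos _) _) (inv_pos.mpr hA0)) (inv_pos.mpr hB0)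
    apply mul_pos (Real.rpow_pos_of_pos hm0 _)
    exact inv_pos.mpr (pow_pos (by linarith) d)
  -- main chain
  have hE : (m:ℝ) ^ d * (m:ℝ) ^ ((2:ℝ) - d) = (m:ℝ) ^ 2 := by
    rw [← Real.rpow_natCast (m:ℝ) d, ← Real.rpow_add hm0]
    rw [show (d:ℝ) + ((2:ℝ) - d) = ((2:ℕ):ℝ) by push_cast; ring, Real.rpow_natCast]
  have step1 : (Real.exp 1 * 2 ^ d * (2 * Real.sqrt d) ^ d * (4 * d))⁻¹ * t⁻¹ * A⁻¹ * B⁻¹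
      ≤ ((m:ℝ)/2) ^ d * TermLB := by
    have hrw : ((m:ℝ)/2) ^ d * TermLB =
        Real.exp (-1) * (2 ^ d : ℝ)⁻¹ * ((2 * Real.sqrt d) ^ d)⁻¹ * A⁻¹ * B⁻¹ * (m:ℝ) ^ 2 := by
      rw [hTdef, div_pow, ← hE]
      field_simp
    rw [hrw]
    have hlhs : (Real.exp 1 * 2 ^ d * (2 * Real.sqrt d) ^ d * (4 * d))⁻¹ * t⁻¹ * A⁻¹ * B⁻¹ =
        Real.exp (-1) * (2 ^ d : ℝ)⁻¹ * ((2 * Real.sqrt d) ^ d)⁻¹ * A⁻¹ * B⁻¹ *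
          ((4 * (d:ℝ))⁻¹ * t⁻¹) := by
      rw [show Real.exp (-1) = (Real.exp 1)⁻¹ from Real.exp_neg 1, mul_inv, mul_inv, mul_inv]
      ring
    rw [hlhs]
    apply mul_le_mul_of_nonneg_left
    · rw [← div_eq_inv_mul, div_le_iff₀ (by linarith)]
      calc t⁻¹ ≤ 4 * d * m ^ 2 := hm2
        _ = (m:ℝ)^2 * (4 * d) := by ring
    · have : (0:ℝ) < (2 ^ d : ℝ)⁻¹ := by positivity
      have h2 : (0:ℝ) < ((2 * Real.sqrt d) ^ d)⁻¹ := inv_pos.mpr (pow_pos (by linarith) d)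
      positivity
  have step2 : ((m:ℝ)/2) ^ d * TermLB ≤ (S.card : ℝ) * TermLB :=
    mul_le_mul_of_nonneg_right hScard hTpos.le
  have step3 : (S.card : ℝ) * TermLB ≤ ∑ n ∈ S,
      (Real.exp (-(znorm n ^ 2) * t) * znorm n ^ ((2 : ℝ) - d) *
        (Real.log (znorm n))⁻¹ * (Real.log (Real.log (znorm n)))⁻¹) := by
    have := Finset.card_nsmul_le_sum S
      (fun n => Real.exp (-(znorm n ^ 2) * t) * znorm n ^ ((2 : ℝ) - d) *
        (Real.log (znorm n))⁻¹ * (Real.log (Real.log (znorm n)))⁻¹) TermLB hterm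
    rwa [nsmul_eq_mul] at this
  -- relate to the tsum over the subtype
  haveI : Finite {n : Fin d → ℤ // 3 ≤ znorm n ∧ znorm n ≤ N} := finite_index N
  have hsummable : Summable (fun n : {n : Fin d → ℤ // 3 ≤ znorm n ∧ znorm n ≤ N} =>
      Real.exp (-(znorm n.1 ^ 2) * t) * znorm n.1 ^ ((2 : ℝ) - d) *
        (Real.log (znorm n.1))⁻¹ * (Real.log (Real.log (znorm n.1)))⁻¹) :=
    Summable.of_finite
  have step4 : ∑ n ∈ S,
      (Real.exp (-(znorm n ^ 2) * t) * znorm n ^ ((2 : ℝ) - d) *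
        (Real.log (znorm n))⁻¹ * (Real.log (Real.log (znorm n)))⁻¹)
      ≤ ∑' n : {n : Fin d → ℤ // 3 ≤ znorm n ∧ znorm n ≤ N},
          Real.exp (-(znorm n.1 ^ 2) * t) * znorm n.1 ^ ((2 : ℝ) - d) *
            (Real.log (znorm n.1))⁻¹ * (Real.log (Real.log (znorm n.1)))⁻¹ := by
    have heq : ∑ n ∈ S.subtype (fun n => 3 ≤ znorm n ∧ znorm n ≤ N),
        (Real.exp (-(znorm n.1 ^ 2) * t) * znorm n.1 ^ ((2 : ℝ) - d) *
          (Real.log (znorm n.1))⁻¹ * (Real.log (Real.log (znorm n.1)))⁻¹) = ∑ n ∈ S,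
        (Real.exp (-(znorm n ^ 2) * t) * znorm n ^ ((2 : ℝ) - d) *
          (Real.log (znorm n))⁻¹ * (Real.log (Real.log (znorm n)))⁻¹) :=
      Finset.sum_subtype_of_mem (fun n => Real.exp (-(znorm n ^ 2) * t) *
        znorm n ^ ((2 : ℝ) - d) * (Real.log (znorm n))⁻¹ *
        (Real.log (Real.log (znorm n)))⁻¹) (fun n hn => hPS n hn)
    rw [← heq]
    apply Summable.sum_le_tsum
    · intro b _
      have hb3 := b.2.1
      have hlogs := logs_pos hb3
      have hb0 : 0 < znorm b.1 := by linarith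
      exact mul_nonneg (mul_nonneg (mul_nonneg (Real.exp_pos _).le
        (Real.rpow_nonneg (znorm_nonneg _) _)) (inv_nonneg.mpr hlogs.1.le))
        (inv_nonneg.mpr hlogs.2.le)
    · exact hsummable
  calc (Real.exp 1 * 2 ^ d * (2 * Real.sqrt d) ^ d * (4 * d))⁻¹ * t⁻¹ * A⁻¹ * B⁻¹
      ≤ ((m:ℝ)/2) ^ d * TermLB := step1
    _ ≤ (S.card : ℝ) * TermLB := step2
    _ ≤ _ := step3
    _ ≤ _ := step4
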